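/- arXiv:1006.2724 — 7 statements merged into one kernel-verified Lean document; each statement's English description precedes it below -/
import Mathlib

section
/- Let u : (0,1] → ℝ be continuously differentiable with u(1) = 0, and set E = 2π ∫₀¹ u'(r)² r dr. Then for every r ∈ (0,1], exp(4π·u(r)²) ≤ r^(−2E). In particular, if E ≤ 1 then exp(4π·u(r)²) ≤ r^(−2) for all r ∈ (0,1]. -/
open Real MeasureTheory Set

lemma cs_integral {μ : Measure ℝ} {f g : ℝ → ℝ}
    (hf : Integrable (fun s => f s ^ 2) μ) (hg : Integrable (fun s => g s ^ 2) μ)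
    (hfg : Integrable (fun s => f s * g s) μ) :
    (∫ s, f s * g s ∂μ) ^ 2 ≤ (∫ s, f s ^ 2 ∂μ) * ∫ s, g s ^ 2 ∂μ := by
  set A := ∫ s, f s ^ 2 ∂μ
  set B := ∫ s, f s * g s ∂μ
  set C := ∫ s, g s ^ 2 ∂μ
  have key : ∀ t : ℝ, 0 ≤ A * (t * t) + (2 * B) * t + C := by
    intro t
    have h1 : Integrable (fun s => t ^ 2 * f s ^ 2 + (2 * t) * (f s * g s)) μ :=
      (hf.const_mul _).add (hfg.const_mul _)
    have h2 : Integrable (fun s => t ^ 2 * f s ^ 2 + (2 * t) * (f s * g s) + g s ^ 2) μ :=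
      h1.add hg
    have hI : (0:ℝ) ≤ ∫ s, (t ^ 2 * f s ^ 2 + (2 * t) * (f s * g s) + g s ^ 2) ∂μ := by
      apply integral_nonneg
      intro s
      simp only [Pi.zero_apply]
      nlinarith [sq_nonneg (t * f s + g s)]
    calc (0:ℝ) ≤ ∫ s, (t ^ 2 * f s ^ 2 + (2 * t) * (f s * g s) + g s ^ 2) ∂μ := hI
      _ = (∫ s, (t ^ 2 * f s ^ 2 + (2 * t) * (f s * g s)) ∂μ) + C :=
          integral_add h1 hg
      _ = (∫ s, t ^ 2 * f s ^ 2 ∂μ) + (∫ s, (2 * t) * (f s * g s) ∂μ) + C := by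
          rw [integral_add (hf.const_mul _) (hfg.const_mul _)]
      _ = t ^ 2 * A + (2 * t) * B + C := by
          rw [integral_const_mul, integral_const_mul]
      _ = A * (t * t) + (2 * B) * t + C := by ring
  have hd := discrim_le_zero key
  rw [discrim] at hd
  nlinarith [hd]

theorem stmt_1 (u u' : ℝ → ℝ)
    (hderiv : ∀ r ∈ Set.Ioc (0:ℝ) 1, HasDerivWithinAt u (u' r) (Set.Ioc (0:ℝ) 1) r)
    (hcont : ContinuousOn u' (Set.Ioc (0:ℝ) 1))
    (hu1 : u 1 = 0)
    (hint : MeasureTheory.IntegrableOn (fun r => (u' r) ^ 2 * r) (Set.Ioc (0:ℝ) 1))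
    (E : ℝ) (hE : E = 2 * π * ∫ r in Set.Ioc (0:ℝ) 1, (u' r) ^ 2 * r) :
    (∀ r ∈ Set.Ioc (0:ℝ) 1, Real.exp (4 * π * (u r) ^ 2) ≤ r ^ (-(2 * E))) ∧
    (E ≤ 1 → ∀ r ∈ Set.Ioc (0:ℝ) 1, Real.exp (4 * π * (u r) ^ 2) ≤ r ^ (-2 : ℝ)) := by
  have hEnn : 0 ≤ E := by
    rw [hE]
    have : 0 ≤ ∫ r in Set.Ioc (0:ℝ) 1, (u' r) ^ 2 * r := by
      apply setIntegral_nonneg measurableSet_Ioc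
      intro s hs
      exact mul_nonneg (sq_nonneg _) hs.1.le
    positivity
  have main : ∀ r ∈ Set.Ioc (0:ℝ) 1, 4 * π * (u r) ^ 2 ≤ Real.log r * (-(2 * E)) := by
    intro r hr
    obtain ⟨hr0, hr1⟩ := hr
    have hsub : Set.Icc r 1 ⊆ Set.Ioc (0:ℝ) 1 := fun x hx => ⟨lt_of_lt_of_le hr0 hx.1, hx.2⟩
    have hsub' : Set.Ioc r 1 ⊆ Set.Ioc (0:ℝ) 1 := Set.Ioc_subset_Ioc_left hr0.le
    -- FTC: u 1 - u r = ∫ s in r..1, u' s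
    have hcontu : ContinuousOn u (Set.Icc r 1) := fun x hx =>
      ((hderiv x (hsub hx)).continuousWithinAt).mono hsub
    have hderiv' : ∀ x ∈ Set.Ioo r 1, HasDerivWithinAt u (u' x) (Set.Ioi x) x := by
      intro x hx
      refine (hderiv x ⟨lt_trans hr0 hx.1, hx.2.le⟩).mono_of_mem_nhdsWithin ?_
      have h1 : Set.Ioi x ∩ Set.Iic 1 ∈ nhdsWithin x (Set.Ioi x) :=
        Filter.inter_mem self_mem_nhdsWithin (nhdsWithin_le_nhds (Iic_mem_nhds hx.2))
      refine Filter.mem_of_superset h1 ?_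
      rintro y ⟨hy1, hy2⟩
      exact ⟨lt_trans (lt_trans hr0 hx.1) hy1, hy2⟩
    have hintu' : IntervalIntegrable u' volume r 1 :=
      (hcont.mono hsub).intervalIntegrable_of_Icc hr1
    have hFTC : ∫ s in r..1, u' s = u 1 - u r :=
      intervalIntegral.integral_eq_sub_of_hasDeriv_right_of_le hr1 hcontu hderiv' hintu'
    have hur : u r = -(∫ s in Set.Ioc r 1, u' s) := by
      rw [← intervalIntegral.integral_of_le hr1]
      rw [hFTC, hu1]; ring
    -- Cauchy-Schwarz with f = u' * sqrt, g = sqrt⁻¹ on Ioc r 1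
    set f : ℝ → ℝ := fun s => u' s * Real.sqrt s with hf_def
    set g : ℝ → ℝ := fun s => (Real.sqrt s)⁻¹ with hg_def
    have heqf : Set.EqOn (fun s => (u' s) ^ 2 * s) (fun s => f s ^ 2) (Set.Ioc r 1) := by
      intro s hs
      simp only [hf_def, mul_pow, Real.sq_sqrt (le_of_lt (lt_trans hr0 hs.1))]
    have heqg : Set.EqOn (fun s => s⁻¹) (fun s => g s ^ 2) (Set.Ioc r 1) := by
      intro s hs
      simp only [hg_def]
      rw [inv_pow, Real.sq_sqrt (le_of_lt (lt_trans hr0 hs.1))]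
    have heqfg : Set.EqOn u' (fun s => f s * g s) (Set.Ioc r 1) := by
      intro s hs
      have hs0 : (0:ℝ) < s := lt_trans hr0 hs.1
      simp only [hf_def, hg_def]
      rw [mul_assoc, mul_inv_cancel₀ (Real.sqrt_ne_zero'.2 hs0), mul_one]
    have hIf : IntegrableOn (fun s => f s ^ 2) (Set.Ioc r 1) :=
      (hint.mono_set hsub').congr_fun heqf measurableSet_Ioc
    have hIinv : IntegrableOn (fun s : ℝ => s⁻¹) (Set.Ioc r 1) := by
      apply (ContinuousOn.integrableOn_Icc ?_).mono_set Set.Ioc_subset_Icc_self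
      exact ContinuousOn.inv₀ continuousOn_id (fun x hx => ne_of_gt (lt_of_lt_of_le hr0 hx.1))
    have hIg : IntegrableOn (fun s => g s ^ 2) (Set.Ioc r 1) :=
      hIinv.congr_fun heqg measurableSet_Ioc
    have hIfg : IntegrableOn (fun s => f s * g s) (Set.Ioc r 1) := by
      refine IntegrableOn.congr_fun ?_ heqfg measurableSet_Ioc
      exact ((hcont.mono hsub).integrableOn_Icc).mono_set Set.Ioc_subset_Icc_self
    have hcs := cs_integral (μ := volume.restrict (Set.Ioc r 1)) hIf hIg hIfg
    -- identify the three integrals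
    have hB : ∫ s in Set.Ioc r 1, f s * g s = ∫ s in Set.Ioc r 1, u' s :=
      (setIntegral_congr_fun measurableSet_Ioc heqfg).symm
    have hA : ∫ s in Set.Ioc r 1, f s ^ 2 = ∫ s in Set.Ioc r 1, (u' s) ^ 2 * s :=
      (setIntegral_congr_fun measurableSet_Ioc heqf).symm
    have hC : ∫ s in Set.Ioc r 1, g s ^ 2 = -Real.log r := by
      rw [← setIntegral_congr_fun measurableSet_Ioc heqg,
        ← intervalIntegral.integral_of_le hr1]
      rw [integral_inv]
      · rw [one_div, Real.log_inv]
      · rw [Set.uIcc_of_le hr1]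
        intro h
        exact absurd h.1 (not_le.2 hr0)
    -- bound A
    have hAle : ∫ s in Set.Ioc r 1, (u' s) ^ 2 * s ≤ ∫ s in Set.Ioc (0:ℝ) 1, (u' s) ^ 2 * s := by
      apply setIntegral_mono_set hint
      · filter_upwards [ae_restrict_mem measurableSet_Ioc] with s hs
        exact mul_nonneg (sq_nonneg _) hs.1.le
      · exact HasSubset.Subset.eventuallyLE hsub'
    have hAnn : 0 ≤ ∫ s in Set.Ioc r 1, (u' s) ^ 2 * s := by
      apply setIntegral_nonneg measurableSet_Ioc
      intro s hs
      exact mul_nonneg (sq_nonneg _) (le_of_lt (lt_trans hr0 hs.1))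
    have hCnn : 0 ≤ -Real.log r := by
      simp only [neg_nonneg]
      exact Real.log_nonpos hr0.le hr1
    have hEint : ∫ s in Set.Ioc (0:ℝ) 1, (u' s) ^ 2 * s = E / (2 * π) := by
      rw [hE]; field_simp
    rw [hB, hA, hC] at hcs
    have hu2 : (u r) ^ 2 ≤ (∫ s in Set.Ioc r 1, (u' s) ^ 2 * s) * (-Real.log r) := by
      rw [hur, neg_pow]
      simpa using hcs
    have hstep : (∫ s in Set.Ioc r 1, (u' s) ^ 2 * s) * (-Real.log r) ≤
        (E / (2 * π)) * (-Real.log r) := by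
      apply mul_le_mul_of_nonneg_right _ hCnn
      rw [← hEint]; exact hAle
    have hπ : (0:ℝ) < π := Real.pi_pos
    calc 4 * π * (u r) ^ 2
        ≤ 4 * π * ((E / (2 * π)) * (-Real.log r)) := by
          apply mul_le_mul_of_nonneg_left (le_trans hu2 hstep)
          positivity
      _ = Real.log r * (-(2 * E)) := by field_simp; ring
  constructor
  · intro r hr
    rw [Real.rpow_def_of_pos hr.1]
    exact Real.exp_le_exp.2 (main r hr)
  · intro hE1 r hr
    have h1 : Real.exp (4 * π * (u r) ^ 2) ≤ r ^ (-(2 * E)) := by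
      rw [Real.rpow_def_of_pos hr.1]
      exact Real.exp_le_exp.2 (main r hr)
    refine h1.trans (Real.rpow_le_rpow_of_exponent_ge hr.1 hr.2 ?_)
    linarith
end

section
/- Let u : (0,1] → ℝ be continuously differentiable with u(1) = 0 and ∫₀¹ u'(r)² r dr < ∞. Then ‖u‖_{2*} ≤ ‖∇u‖₂, where ‖u‖_{2*} = sup_{r∈(0,1)} |u(r)|·√(2π/log(1/r)) and ‖∇u‖₂² = 2π ∫₀¹ u'(r)² r dr. In particular, the unit ball of the gradient norm in the radial Sobolev space is contained in the unit ball of the 2*-norm. -/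
open Real MeasureTheory Set

/-- The dilation-invariant critical `2*`-norm of a radial function on the unit disk:
`‖u‖_{2*} = sup_{r ∈ (0,1)} |u(r)| · √(2π / log(1/r))`, valued in `[0,∞]`. -/
noncomputable def norm2star (u : ℝ → ℝ) : ENNReal :=
  ⨆ r : Set.Ioo (0:ℝ) 1,
    ENNReal.ofReal (|u r| * Real.sqrt (2 * π / Real.log (1 / (r : ℝ))))

theorem stmt_2 (u u' : ℝ → ℝ)
    (hderiv : ∀ r ∈ Set.Ioc (0:ℝ) 1, HasDerivWithinAt u (u' r) (Set.Ioc (0:ℝ) 1) r)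
    (hcont : ContinuousOn u' (Set.Ioc (0:ℝ) 1))
    (hu1 : u 1 = 0)
    (hint : MeasureTheory.IntegrableOn (fun r => (u' r) ^ 2 * r) (Set.Ioc (0:ℝ) 1)) :
    norm2star u ≤
      ENNReal.ofReal (Real.sqrt (2 * π * ∫ r in Set.Ioc (0:ℝ) 1, (u' r) ^ 2 * r)) := by
  rw [norm2star]
  refine iSup_le fun ⟨r, hr0, hr1⟩ => ENNReal.ofReal_le_ofReal ?_
  simp only
  set I : ℝ := ∫ s in Set.Ioc (0:ℝ) 1, (u' s) ^ 2 * s with hI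
  set A : ℝ := ∫ s in Set.Ioc r 1, (u' s) ^ 2 * s with hA
  set L : ℝ := Real.log (1 / r) with hL
  have hLpos : 0 < L := Real.log_pos (by rw [lt_div_iff₀ hr0]; linarith)
  have hsub : Set.Icc r 1 ⊆ Set.Ioc (0:ℝ) 1 := fun x hx => ⟨lt_of_lt_of_le hr0 hx.1, hx.2⟩
  have hsub' : Set.Ioc r 1 ⊆ Set.Ioc (0:ℝ) 1 := fun x hx => ⟨lt_trans hr0 hx.1, hx.2⟩
  -- FTC
  have hftc : ∫ s in r..1, u' s = u 1 - u r := by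
    apply intervalIntegral.integral_eq_sub_of_hasDeriv_right_of_le hr1.le
    · intro x hx
      exact ((hderiv x (hsub hx)).continuousWithinAt).mono hsub
    · intro x hx
      refine (hderiv x (hsub ⟨hx.1.le, hx.2.le⟩)).mono_of_mem_nhdsWithin ?_
      exact Filter.mem_of_superset (Ioc_mem_nhdsGT_of_mem ⟨le_refl x, hx.2⟩)
        (fun y hy => ⟨lt_trans (lt_trans hr0 hx.1) hy.1, hy.2⟩)
    · exact (hcont.mono (by rwa [Set.uIcc_of_le hr1.le])).intervalIntegrable
  have hur : |u r| = |∫ s in Set.Ioc r 1, u' s| := by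
    rw [← intervalIntegral.integral_of_le hr1.le, hftc, hu1]
    rw [zero_sub, abs_neg]
  -- Cauchy-Schwarz
  have hmeas : MeasurableSet (Set.Ioc r (1:ℝ)) := measurableSet_Ioc
  have hu'meas : AEStronglyMeasurable u' (volume.restrict (Set.Ioc r 1)) :=
    (hcont.mono hsub').aestronglyMeasurable hmeas
  have hAnonneg : 0 ≤ A :=
    setIntegral_nonneg hmeas fun x hx => mul_nonneg (sq_nonneg _) (le_of_lt (lt_trans hr0 hx.1))
  have hcs : |u r| ≤ Real.sqrt A * Real.sqrt L := by
    rw [hur]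
    calc |∫ s in Set.Ioc r 1, u' s| ≤ ∫ s in Set.Ioc r 1, |u' s| :=
          norm_integral_le_integral_norm u'
      _ = ∫ s in Set.Ioc r 1, (|u' s| * Real.sqrt s) * (1 / Real.sqrt s) := by
          apply setIntegral_congr_fun hmeas
          intro x hx
          have hx0 : 0 < x := lt_trans hr0 hx.1
          field_simp
      _ ≤ (∫ s in Set.Ioc r 1, (|u' s| * Real.sqrt s) ^ (2:ℝ)) ^ ((1:ℝ)/2) *
          (∫ s in Set.Ioc r 1, (1 / Real.sqrt s) ^ (2:ℝ)) ^ ((1:ℝ)/2) := by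
          apply integral_mul_le_Lp_mul_Lq_of_nonneg (Real.holderConjugate_iff.mpr ⟨one_lt_two, by norm_num⟩ : Real.HolderConjugate 2 2)
          · exact Filter.Eventually.of_forall fun x => mul_nonneg (abs_nonneg _) (Real.sqrt_nonneg _)
          · exact Filter.Eventually.of_forall fun x => by positivity
          · rw [show ENNReal.ofReal (2:ℝ) = 2 by norm_num]
            rw [memLp_two_iff_integrable_sq]
            · apply (hint.mono_set hsub').congr
              filter_upwards [ae_restrict_mem hmeas] with x hx
              have hx0 : 0 < x := lt_trans hr0 hx.1
              rw [mul_pow, sq_abs, Real.sq_sqrt hx0.le]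
            · exact (((hcont.mono hsub').abs.mul
                (Real.continuous_sqrt.continuousOn)).aestronglyMeasurable hmeas)
          · rw [show ENNReal.ofReal (2:ℝ) = 2 by norm_num]
            rw [memLp_two_iff_integrable_sq]
            · have : IntegrableOn (fun s => (1 / Real.sqrt s) ^ 2) (Set.Icc r 1) := by
                apply ContinuousOn.integrableOn_Icc
                apply ContinuousOn.pow
                apply ContinuousOn.div continuousOn_const
                  (Real.continuous_sqrt.continuousOn)
                intro x hx
                exact Real.sqrt_ne_zero'.2 (lt_of_lt_of_le hr0 hx.1)
              exact this.mono_set Set.Ioc_subset_Icc_self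
            · exact ((continuousOn_const.div Real.continuous_sqrt.continuousOn
                (fun x hx => Real.sqrt_ne_zero'.2 (lt_trans hr0 hx.1))).aestronglyMeasurable hmeas)
      _ = Real.sqrt A * Real.sqrt L := by
          congr 1
          · rw [Real.sqrt_eq_rpow]
            congr 1
            apply setIntegral_congr_fun hmeas
            intro x hx
            have hx0 : 0 < x := lt_trans hr0 hx.1
            simp only [Real.rpow_two, mul_pow, sq_abs, Real.sq_sqrt hx0.le]
          · rw [Real.sqrt_eq_rpow]
            congr 1
            rw [hL, ← integral_one_div_of_pos hr0 one_pos,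
              intervalIntegral.integral_of_le hr1.le]
            apply setIntegral_congr_fun hmeas
            intro x hx
            have hx0 : 0 < x := lt_trans hr0 hx.1
            simp only [Real.rpow_two, div_pow, one_pow, Real.sq_sqrt hx0.le]
  -- combine
  have hAI : A ≤ I := by
    apply setIntegral_mono_set hint
    · filter_upwards [ae_restrict_mem (measurableSet_Ioc : MeasurableSet (Set.Ioc (0:ℝ) 1))]
        with x hx
      exact mul_nonneg (sq_nonneg _) hx.1.le
    · exact HasSubset.Subset.eventuallyLE hsub'
  calc |u r| * Real.sqrt (2 * π / L)
      ≤ (Real.sqrt A * Real.sqrt L) * Real.sqrt (2 * π / L) :=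
        mul_le_mul_of_nonneg_right hcs (Real.sqrt_nonneg _)
    _ = Real.sqrt A * Real.sqrt (L * (2 * π / L)) := by
        rw [mul_assoc, ← Real.sqrt_mul hLpos.le]
    _ = Real.sqrt (2 * π * A) := by
        rw [mul_div_assoc, mul_comm L, mul_assoc, div_mul_cancel₀ _ hLpos.ne',
          ← Real.sqrt_mul (by positivity), mul_comm A]
    _ ≤ Real.sqrt (2 * π * I) := by
        apply Real.sqrt_le_sqrt
        have : (0:ℝ) ≤ 2 * π := by positivity
        nlinarith
end

section
/- Let u, u₁, u₂, … : (0,1) → ℝ be measurable radial functions with ‖u‖_{2*} < 1 and ‖uₖ − u‖_{2*} → 0 as k → ∞ (where ‖v‖_{2*} = sup_{r∈(0,1)} |v(r)|·√(2π/log(1/r))). Then ∫_𝔻 exp(4π·uₖ²) dx → ∫_𝔻 exp(4π·u²) dx, i.e. 2π ∫₀¹ exp(4π·uₖ(r)²) r dr → 2π ∫₀¹ exp(4π·u(r)²) r dr. In other words, the Trudinger–Moser functional u ↦ ∫_𝔻 e^{4πu²} dx is continuous in the 2*-norm on the set {u radial : ‖u‖_{2*} < 1}. -/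
open Real MeasureTheory Set Filter Topology

lemma aux_log_pos {r : ℝ} (hr : r ∈ Set.Ioo (0:ℝ) 1) : 0 < Real.log (1/r) :=
  Real.log_pos (one_lt_one_div hr.1 hr.2)

lemma aux_le {w : ℝ → ℝ} {C : ℝ} (hC0 : 0 ≤ C) (hC : norm2star w ≤ ENNReal.ofReal C)
    {r : ℝ} (hr : r ∈ Set.Ioo (0:ℝ) 1) :
    |w r| * Real.sqrt (2 * π / Real.log (1/r)) ≤ C := by
  have h := le_trans
    (le_iSup (fun r : Set.Ioo (0:ℝ) 1 =>
      ENNReal.ofReal (|w r| * Real.sqrt (2 * π / Real.log (1 / (r : ℝ))))) ⟨r, hr⟩) hC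
  exact (ENNReal.ofReal_le_ofReal_iff hC0).mp h

lemma aux_key {C r w : ℝ} (hr : r ∈ Set.Ioo (0:ℝ) 1) (hC : 0 ≤ C)
    (hw : |w| * Real.sqrt (2 * π / Real.log (1/r)) ≤ C) :
    Real.exp (4 * π * w ^ 2) * r ≤ r ^ (1 - 2 * C ^ 2) := by
  have hLpos : 0 < Real.log (1/r) := aux_log_pos hr
  set L := Real.log (1/r) with hL
  have hq : 0 ≤ 2 * π / L := by positivity
  have h1 : w ^ 2 * (2 * π / L) ≤ C ^ 2 := by
    have hm := mul_le_mul hw hw (by positivity) hC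
    calc w ^ 2 * (2 * π / L)
        = (|w| * Real.sqrt (2 * π / L)) * (|w| * Real.sqrt (2 * π / L)) := by
          rw [mul_mul_mul_comm, ← sq_abs, Real.mul_self_sqrt hq]; ring
      _ ≤ C * C := hm
      _ = C ^ 2 := (sq C).symm
  have h2 : 4 * π * w ^ 2 ≤ 2 * C ^ 2 * L := by
    have h3 : w ^ 2 * (2 * π / L) * L ≤ C ^ 2 * L :=
      mul_le_mul_of_nonneg_right h1 hLpos.le
    have h4 : w ^ 2 * (2 * π / L) * L = 2 * π * w ^ 2 := by
      field_simp
    nlinarith [Real.pi_pos]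
  have hrpos : 0 < r := hr.1
  have hx : Real.exp (2 * C ^ 2 * L) = r ^ (-(2 * C ^ 2)) := by
    rw [Real.rpow_def_of_pos hrpos]
    congr 1
    rw [hL, one_div, Real.log_inv]; ring
  calc Real.exp (4 * π * w ^ 2) * r
      ≤ r ^ (-(2 * C ^ 2)) * r :=
        mul_le_mul_of_nonneg_right ((Real.exp_le_exp.mpr h2).trans_eq hx) hrpos.le
    _ = r ^ (1 - 2 * C ^ 2) := by
        rw [show (1 - 2 * C ^ 2) = -(2 * C ^ 2) + 1 by ring,
          Real.rpow_add hrpos, Real.rpow_one]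

theorem stmt_3 (u : ℝ → ℝ) (v : ℕ → ℝ → ℝ)
    (hu : Measurable u) (hv : ∀ k, Measurable (v k))
    (hnorm : norm2star u < 1)
    (hconv : Tendsto (fun k => norm2star (fun r => v k r - u r)) atTop (𝓝 0)) :
    Tendsto
      (fun k => 2 * π * ∫ r in Set.Ioo (0:ℝ) 1, Real.exp (4 * π * (v k r) ^ 2) * r)
      atTop
      (𝓝 (2 * π * ∫ r in Set.Ioo (0:ℝ) 1, Real.exp (4 * π * (u r) ^ 2) * r)) := by
  set M : ℝ := (norm2star u).toReal with hMdef
  have hM1 : M < 1 := by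
    refine ENNReal.toReal_lt_of_lt_ofReal ?_
    rwa [ENNReal.ofReal_one]
  have hM0 : 0 ≤ M := ENNReal.toReal_nonneg
  have huM : norm2star u ≤ ENNReal.ofReal M :=
    le_of_eq (ENNReal.ofReal_toReal hnorm.ne_top).symm
  set M' : ℝ := (1 + M) / 2 with hM'def
  have hM'1 : M' < 1 := by rw [hM'def]; linarith
  have hM'0 : 0 ≤ M' := by rw [hM'def]; linarith
  set ε : ℝ := (1 - M) / 2 with hεdef
  have hε : 0 < ε := by rw [hεdef]; linarith
  have heve : ∀ᶠ k in atTop,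
      norm2star (fun r => v k r - u r) ≤ ENNReal.ofReal ε :=
    (hconv.eventually (gt_mem_nhds (ENNReal.ofReal_pos.mpr hε))).mono
      fun k hk => hk.le
  refine Tendsto.const_mul _ ?_
  refine tendsto_integral_filter_of_dominated_convergence
    (fun r => r ^ (1 - 2 * M' ^ 2)) ?_ ?_ ?_ ?_
  · exact Eventually.of_forall fun k =>
      ((Real.measurable_exp.comp ((measurable_const.mul ((hv k).pow_const 2)))).mul
        measurable_id).aestronglyMeasurable
  · refine heve.mono fun k hk => ?_
    refine (ae_restrict_iff' measurableSet_Ioo).mpr (ae_of_all _ fun r hr => ?_)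
    have hc : (0:ℝ) ≤ Real.sqrt (2 * π / Real.log (1/r)) := Real.sqrt_nonneg _
    have h1 : |u r| * Real.sqrt (2 * π / Real.log (1/r)) ≤ M := aux_le hM0 huM hr
    have h2 : |v k r - u r| * Real.sqrt (2 * π / Real.log (1/r)) ≤ ε :=
      aux_le hε.le hk hr
    have htri : |v k r| ≤ |u r| + |v k r - u r| := by
      calc |v k r| = |u r + (v k r - u r)| := by ring_nf
        _ ≤ |u r| + |v k r - u r| := abs_add_le _ _
    have hw : |v k r| * Real.sqrt (2 * π / Real.log (1/r)) ≤ M' := by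
      have := mul_le_mul_of_nonneg_right htri hc
      rw [add_mul] at this
      have : |v k r| * Real.sqrt (2 * π / Real.log (1/r)) ≤ M + ε := by linarith
      linarith [this, show M + ε = M' by rw [hεdef, hM'def]; ring]
    have hkey := aux_key hr hM'0 hw
    have hpos : 0 < Real.exp (4 * π * (v k r) ^ 2) * r :=
      mul_pos (Real.exp_pos _) hr.1
    rw [Real.norm_eq_abs, abs_of_pos hpos]
    exact hkey
  · have hii : IntervalIntegrable (fun x : ℝ => x ^ (1 - 2 * M' ^ 2)) volume 0 1 :=
      intervalIntegral.intervalIntegrable_rpow' (by nlinarith)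
    rw [intervalIntegrable_iff, uIoc_of_le (by norm_num : (0:ℝ) ≤ 1)] at hii
    exact hii.mono_set Ioo_subset_Ioc_self
  · refine (ae_restrict_iff' measurableSet_Ioo).mpr (ae_of_all _ fun r hr => ?_)
    set c : ℝ := Real.sqrt (2 * π / Real.log (1/r)) with hcdef
    have hcpos : 0 < c := Real.sqrt_pos.mpr
      (div_pos (by positivity) (aux_log_pos hr))
    have h0 : Tendsto (fun k => ENNReal.ofReal (|v k r - u r| * c)) atTop (𝓝 0) := by
      refine tendsto_of_tendsto_of_tendsto_of_le_of_le tendsto_const_nhds hconv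
        (fun k => zero_le) (fun k => ?_)
      exact le_iSup (fun r : Set.Ioo (0:ℝ) 1 =>
        ENNReal.ofReal (|v k r - u r| * Real.sqrt (2 * π / Real.log (1 / (r : ℝ))))) ⟨r, hr⟩
    have h1 : Tendsto (fun k => |v k r - u r| * c) atTop (𝓝 0) := by
      have ht := (ENNReal.tendsto_toReal (by simp)).comp h0
      simp only [ENNReal.toReal_zero] at ht
      refine ht.congr fun k => ?_
      simp [Function.comp, ENNReal.toReal_ofReal (mul_nonneg (abs_nonneg _) hcpos.le), hcpos.le]
    have h2 : Tendsto (fun k => |v k r - u r|) atTop (𝓝 0) := by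
      have := h1.mul_const c⁻¹
      simpa [mul_assoc, mul_inv_cancel₀ hcpos.ne'] using this
    have h3 : Tendsto (fun k => v k r) atTop (𝓝 (u r)) := by
      have h4 : Tendsto (fun k => v k r - u r) atTop (𝓝 0) := by
        rwa [tendsto_zero_iff_abs_tendsto_zero]
      have := h4.add_const (u r)
      simpa using this
    have := ((Real.continuous_exp.tendsto _).comp ((h3.pow 2).const_mul (4 * π))).mul_const r
    simpa [Function.comp] using this
end

section
/- Let u, v : (0,1) → ℝ be continuous functions whose supports are compact subsets of the open interval (0,1). Then there exists K such that for all natural numbers k ≥ K, ‖u + h_{1/k}v‖_{2*} = max(‖u‖_{2*}, ‖v‖_{2*}), where (h_{1/k}v)(r) = √k · v(r^{1/k}) and ‖w‖_{2*} = sup_{r∈(0,1)} |w(r)|·√(2π/log(1/r)). -/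
open Real MeasureTheory Set

lemma aux_mem_Ioo_rpow {r : ℝ} (hr : r ∈ Set.Ioo (0:ℝ) 1) {k : ℕ} (hk : 1 ≤ k) :
    r ^ ((k : ℝ)⁻¹) ∈ Set.Ioo (0:ℝ) 1 := by
  have hk0 : (0:ℝ) < (k:ℝ)⁻¹ := by positivity
  exact ⟨Real.rpow_pos_of_pos hr.1 _, Real.rpow_lt_one hr.1.le hr.2 hk0⟩

lemma aux_key_s5 (v : ℝ → ℝ) {k : ℕ} (hk : 1 ≤ k) {r : ℝ} (hr : r ∈ Set.Ioo (0:ℝ) 1) :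
    |Real.sqrt k * v (r ^ ((k : ℝ)⁻¹))| * Real.sqrt (2 * π / Real.log (1 / r)) =
      |v (r ^ ((k : ℝ)⁻¹))| * Real.sqrt (2 * π / Real.log (1 / (r ^ ((k : ℝ)⁻¹)))) := by
  have hkR : (0:ℝ) < (k:ℝ) := by exact_mod_cast hk
  set ρ := r ^ ((k : ℝ)⁻¹) with hρdef
  have hρ : ρ ∈ Set.Ioo (0:ℝ) 1 := aux_mem_Ioo_rpow hr hk
  have hLρ : 0 < Real.log (1 / ρ) := Real.log_pos (one_lt_one_div hρ.1 hρ.2)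
  have hlogρ : Real.log ρ = (k:ℝ)⁻¹ * Real.log r := Real.log_rpow hr.1 _
  have hlog : Real.log (1 / r) = (k:ℝ) * Real.log (1 / ρ) := by
    rw [one_div, one_div, Real.log_inv, Real.log_inv, hlogρ]
    field_simp
  rw [hlog, abs_mul, abs_of_nonneg (Real.sqrt_nonneg _)]
  have h2 : 2 * π / ((k:ℝ) * Real.log (1 / ρ)) = (2 * π / Real.log (1 / ρ)) / (k:ℝ) := by
    field_simp
  rw [h2, Real.sqrt_div (by positivity) _]
  have hsk : Real.sqrt (k:ℝ) ≠ 0 := by positivity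
  field_simp

lemma aux_dilate (v : ℝ → ℝ) {k : ℕ} (hk : 1 ≤ k) :
    norm2star (fun r => Real.sqrt k * v (r ^ ((k : ℝ)⁻¹))) = norm2star v := by
  have hkR : (0:ℝ) < (k:ℝ) := by exact_mod_cast hk
  apply le_antisymm
  · refine iSup_le fun p => ?_
    obtain ⟨r, hr⟩ := p
    have hρ : r ^ ((k : ℝ)⁻¹) ∈ Set.Ioo (0:ℝ) 1 := aux_mem_Ioo_rpow hr hk
    calc ENNReal.ofReal (|(fun r => Real.sqrt k * v (r ^ ((k : ℝ)⁻¹))) r| *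
            Real.sqrt (2 * π / Real.log (1 / r)))
        = ENNReal.ofReal (|v (r ^ ((k : ℝ)⁻¹))| *
            Real.sqrt (2 * π / Real.log (1 / (r ^ ((k : ℝ)⁻¹))))) := by
          rw [aux_key_s5 v hk hr]
      _ ≤ norm2star v := le_iSup (fun q : Set.Ioo (0:ℝ) 1 =>
            ENNReal.ofReal (|v q| * Real.sqrt (2 * π / Real.log (1 / (q : ℝ)))))
            ⟨r ^ ((k : ℝ)⁻¹), hρ⟩
  · refine iSup_le fun p => ?_
    obtain ⟨ρ, hρ⟩ := p
    have hrm : ρ ^ (k:ℕ) ∈ Set.Ioo (0:ℝ) 1 :=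
      ⟨pow_pos hρ.1 _, pow_lt_one₀ hρ.1.le hρ.2 (by omega)⟩
    have hback : (ρ ^ (k:ℕ)) ^ ((k : ℝ)⁻¹) = ρ := by
      rw [← Real.rpow_natCast ρ k, ← Real.rpow_mul hρ.1.le,
        mul_inv_cancel₀ (ne_of_gt hkR), Real.rpow_one]
    calc ENNReal.ofReal (|v ρ| * Real.sqrt (2 * π / Real.log (1 / ρ)))
        = ENNReal.ofReal (|(fun r => Real.sqrt k * v (r ^ ((k : ℝ)⁻¹))) (ρ ^ (k:ℕ))| *
            Real.sqrt (2 * π / Real.log (1 / (ρ ^ (k:ℕ))))) := by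
          rw [aux_key_s5 v hk hrm, hback]
      _ ≤ _ := le_iSup (fun q : Set.Ioo (0:ℝ) 1 =>
            ENNReal.ofReal (|Real.sqrt k * v ((q:ℝ) ^ ((k : ℝ)⁻¹))| *
              Real.sqrt (2 * π / Real.log (1 / (q : ℝ))))) ⟨ρ ^ (k:ℕ), hrm⟩

lemma aux_disjoint_max (u w : ℝ → ℝ)
    (h : ∀ r : ℝ, r ∈ Set.Ioo (0:ℝ) 1 → u r = 0 ∨ w r = 0) :
    norm2star (fun r => u r + w r) = max (norm2star u) (norm2star w) := by
  unfold norm2star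
  rw [← iSup_sup_eq]
  congr 1
  funext p
  obtain ⟨r, hr⟩ := p
  have hs : 0 ≤ Real.sqrt (2 * π / Real.log (1 / r)) := Real.sqrt_nonneg _
  have habs : |u r + w r| = max (|u r|) (|w r|) := by
    rcases h r hr with h0 | h0 <;> simp [h0, abs_nonneg]
  show ENNReal.ofReal (|u r + w r| * _) = _
  rw [habs, max_mul_of_nonneg _ _ hs]
  exact Monotone.map_max (fun _ _ h => ENNReal.ofReal_le_ofReal h)

theorem stmt_5 (u v : ℝ → ℝ)
    (hu : Continuous u) (hv : Continuous v)
    (hus : HasCompactSupport u) (hvs : HasCompactSupport v)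
    (husupp : tsupport u ⊆ Set.Ioo (0:ℝ) 1) (hvsupp : tsupport v ⊆ Set.Ioo (0:ℝ) 1) :
    ∃ K : ℕ, ∀ k : ℕ, K ≤ k →
      norm2star (fun r => u r + Real.sqrt k * v (r ^ ((k : ℝ)⁻¹))) =
        max (norm2star u) (norm2star v) := by
  -- lower bound for tsupport u
  obtain ⟨a, ha0, hua⟩ : ∃ a : ℝ, 0 < a ∧ tsupport u ⊆ Set.Ici a := by
    rcases eq_empty_or_nonempty (tsupport u) with h | h
    · exact ⟨1/2, by norm_num, by rw [h]; exact empty_subset _⟩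
    · have hbdd : BddBelow (tsupport u) := hus.bddBelow
      refine ⟨sInf (tsupport u), ?_, fun x hx => csInf_le hbdd hx⟩
      have : sInf (tsupport u) ∈ tsupport u := hus.isClosed.csInf_mem h hbdd
      exact (husupp this).1
  -- upper bound for tsupport v
  obtain ⟨d, hd0, hd1, hvd⟩ : ∃ d : ℝ, 0 < d ∧ d < 1 ∧ tsupport v ⊆ Set.Iic d := by
    rcases eq_empty_or_nonempty (tsupport v) with h | h
    · exact ⟨1/2, by norm_num, by norm_num, by rw [h]; exact empty_subset _⟩
    · have hbdd : BddAbove (tsupport v) := hvs.bddAbove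
      refine ⟨sSup (tsupport v), ?_, ?_, fun x hx => le_csSup hbdd hx⟩
      · exact (hvsupp (hvs.isClosed.csSup_mem h hbdd)).1
      · exact (hvsupp (hvs.isClosed.csSup_mem h hbdd)).2
  obtain ⟨N, hN⟩ : ∃ N : ℕ, d ^ N < a := exists_pow_lt_of_lt_one ha0 hd1
  refine ⟨max N 1, fun k hk => ?_⟩
  have hk1 : 1 ≤ k := le_trans (le_max_right N 1) hk
  have hkN : N ≤ k := le_trans (le_max_left N 1) hk
  have hdk : d ^ k < a := lt_of_le_of_lt (pow_le_pow_of_le_one hd0.le hd1.le hkN) hN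
  have hdisj : ∀ r : ℝ, r ∈ Set.Ioo (0:ℝ) 1 →
      u r = 0 ∨ Real.sqrt k * v (r ^ ((k : ℝ)⁻¹)) = 0 := by
    intro r hr
    by_cases hur : u r = 0
    · exact Or.inl hur
    · right
      have hrA : a ≤ r := hua (subset_tsupport u hur)
      have hvz : v (r ^ ((k : ℝ)⁻¹)) = 0 := by
        by_contra hvnz
        have hρd : r ^ ((k : ℝ)⁻¹) ≤ d := hvd (subset_tsupport v hvnz)
        have hρ0 : 0 ≤ r ^ ((k : ℝ)⁻¹) := (Real.rpow_pos_of_pos hr.1 _).le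
        have : (r ^ ((k : ℝ)⁻¹)) ^ (k:ℕ) ≤ d ^ k := pow_le_pow_left₀ hρ0 hρd k
        have hknz : (k:ℝ) ≠ 0 := by
          exact_mod_cast Nat.pos_of_ne_zero (by omega) |>.ne'
        have hrid : (r ^ ((k : ℝ)⁻¹)) ^ (k:ℕ) = r := by
          rw [← Real.rpow_natCast (r ^ ((k : ℝ)⁻¹)) k, ← Real.rpow_mul hr.1.le,
            inv_mul_cancel₀ hknz, Real.rpow_one]
        rw [hrid] at this
        linarith
      rw [hvz, mul_zero]
  rw [aux_disjoint_max u _ hdisj, aux_dilate v hk1]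
end

section
/- Let u, v : (0,1) → ℝ be continuously differentiable functions whose supports are compact subsets of (0,1), and suppose ‖v‖_{2*} > ‖u‖_{2*}, where ‖w‖_{2*} = sup_{r∈(0,1)} |w(r)|·√(2π/log(1/r)). Define uₖ(r) = u(r) + √k · v(r^{1/k}). Then: (i) for every continuously differentiable φ : (0,1) → ℝ with compact support in (0,1), ∫₀¹ uₖ'(r) φ'(r) r dr = ∫₀¹ u'(r) φ'(r) r dr for all sufficiently large k (so uₖ converges weakly to u in the radial Sobolev space); (ii) ‖uₖ‖_{2*} = ‖v‖_{2*} for all sufficiently large k. In particular, since ‖v‖_{2*} ≠ ‖u‖_{2*}, the map w ↦ ‖w‖_{2*} is not weakly sequentially continuous at u. -/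
open Real MeasureTheory Set

lemma aux_bound_above (v : ℝ → ℝ) (hvs : HasCompactSupport v)
    (hsupp : tsupport v ⊆ Set.Ioo (0:ℝ) 1) :
    ∃ b ∈ Set.Ioo (0:ℝ) 1, ∀ x, b < x → v x = 0 := by
  set S : Set ℝ := tsupport v ∪ {1/2} with hS
  have hSc : IsCompact S := hvs.union isCompact_singleton
  have hSsub : S ⊆ Set.Ioo (0:ℝ) 1 := by
    rintro x (hx | hx)
    · exact hsupp hx
    · simp only [Set.mem_singleton_iff] at hx; subst hx; norm_num
  have hne : S.Nonempty := ⟨1/2, Or.inr rfl⟩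
  refine ⟨sSup S, hSsub (hSc.sSup_mem hne), fun x hx => ?_⟩
  by_contra h
  have hxS : x ∈ S := Or.inl (subset_tsupport v h)
  exact absurd (le_csSup hSc.bddAbove hxS) (not_le.2 hx)

lemma aux_bound_below (v : ℝ → ℝ) (hvs : HasCompactSupport v)
    (hsupp : tsupport v ⊆ Set.Ioo (0:ℝ) 1) :
    ∃ c ∈ Set.Ioo (0:ℝ) 1, ∀ x, x < c → v x = 0 := by
  set S : Set ℝ := tsupport v ∪ {1/2} with hS
  have hSc : IsCompact S := hvs.union isCompact_singleton
  have hSsub : S ⊆ Set.Ioo (0:ℝ) 1 := by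
    rintro x (hx | hx)
    · exact hsupp hx
    · simp only [Set.mem_singleton_iff] at hx; subst hx; norm_num
  have hne : S.Nonempty := ⟨1/2, Or.inr rfl⟩
  refine ⟨sInf S, hSsub (hSc.sInf_mem hne), fun x hx => ?_⟩
  by_contra h
  have hxS : x ∈ S := Or.inl (subset_tsupport v h)
  exact absurd (csInf_le hSc.bddBelow hxS) (not_le.2 hx)

lemma aux_rpow_gt (b : ℝ) (hb : 0 < b) (k : ℕ) (hk : 1 ≤ k) (x : ℝ) (hx : b ^ k < x) :
    b < x ^ ((k:ℝ)⁻¹) := by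
  have hk0 : (k:ℝ) ≠ 0 := Nat.cast_ne_zero.2 (by omega)
  have h := Real.rpow_lt_rpow (pow_pos hb k).le hx (by positivity : (0:ℝ) < (k:ℝ)⁻¹)
  rwa [← Real.rpow_natCast b k, ← Real.rpow_mul hb.le, mul_inv_cancel₀ hk0,
    Real.rpow_one] at h

lemma aux_term_eq (k : ℕ) (hk : 1 ≤ k) (v : ℝ → ℝ) (r : ℝ) (hr : r ∈ Set.Ioo (0:ℝ) 1) :
    |Real.sqrt k * v (r ^ ((k:ℝ)⁻¹))| * Real.sqrt (2 * π / Real.log (1 / r))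
      = |v (r ^ ((k:ℝ)⁻¹))| * Real.sqrt (2 * π / Real.log (1 / (r ^ ((k:ℝ)⁻¹)))) := by
  have hk0 : (k:ℝ) ≠ 0 := Nat.cast_ne_zero.2 (by omega)
  have hL : 0 < Real.log (1 / r) := Real.log_pos (one_lt_one_div hr.1 hr.2)
  have hlog : Real.log (1 / (r ^ ((k:ℝ)⁻¹))) = (k:ℝ)⁻¹ * Real.log (1 / r) := by
    rw [one_div, one_div, Real.log_inv, Real.log_inv, Real.log_rpow hr.1]; ring
  have h2 : 2 * π / Real.log (1 / (r ^ ((k:ℝ)⁻¹))) = (k:ℝ) * (2 * π / Real.log (1 / r)) := by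
    rw [hlog]; field_simp
  rw [h2, Real.sqrt_mul (Nat.cast_nonneg k), abs_mul,
    abs_of_nonneg (Real.sqrt_nonneg (k:ℝ))]
  ring

lemma aux_mem_rpow_inv (k : ℕ) (hk : 1 ≤ k) (r : ℝ) (hr : r ∈ Set.Ioo (0:ℝ) 1) :
    r ^ ((k:ℝ)⁻¹) ∈ Set.Ioo (0:ℝ) 1 :=
  ⟨Real.rpow_pos_of_pos hr.1 _,
    Real.rpow_lt_one hr.1.le hr.2 (by positivity)⟩

lemma aux_norm2star_dilate (v : ℝ → ℝ) (k : ℕ) (hk : 1 ≤ k) :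
    norm2star (fun r => Real.sqrt k * v (r ^ ((k:ℝ)⁻¹))) = norm2star v := by
  have hk0 : (k:ℝ) ≠ 0 := Nat.cast_ne_zero.2 (by omega)
  unfold norm2star
  apply le_antisymm
  · apply iSup_le
    rintro ⟨r, hr⟩
    have hs := aux_mem_rpow_inv k hk r hr
    rw [show |Real.sqrt k * v (r ^ ((k:ℝ)⁻¹))| * Real.sqrt (2 * π / Real.log (1 / r))
        = |v (r ^ ((k:ℝ)⁻¹))| * Real.sqrt (2 * π / Real.log (1 / (r ^ ((k:ℝ)⁻¹))))
        from aux_term_eq k hk v r hr]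
    exact le_iSup (fun s : Set.Ioo (0:ℝ) 1 =>
      ENNReal.ofReal (|v s| * Real.sqrt (2 * π / Real.log (1 / (s : ℝ))))) ⟨_, hs⟩
  · apply iSup_le
    rintro ⟨s, hs⟩
    have hr : s ^ ((k:ℝ)) ∈ Set.Ioo (0:ℝ) 1 :=
      ⟨Real.rpow_pos_of_pos hs.1 _, Real.rpow_lt_one hs.1.le hs.2 (by positivity)⟩
    have hss : (s ^ ((k:ℝ))) ^ ((k:ℝ)⁻¹) = s := by
      rw [← Real.rpow_mul hs.1.le, mul_inv_cancel₀ hk0, Real.rpow_one]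
    have h := aux_term_eq k hk v (s ^ ((k:ℝ))) hr
    rw [hss] at h
    rw [show |v s| * Real.sqrt (2 * π / Real.log (1 / s))
        = |Real.sqrt k * v ((s ^ ((k:ℝ))) ^ ((k:ℝ)⁻¹))| *
            Real.sqrt (2 * π / Real.log (1 / (s ^ ((k:ℝ))))) from by rw [hss, ← h]]
    exact le_iSup (fun r : Set.Ioo (0:ℝ) 1 =>
      ENNReal.ofReal (|Real.sqrt k * v ((r:ℝ) ^ ((k:ℝ)⁻¹))| *
        Real.sqrt (2 * π / Real.log (1 / (r : ℝ))))) ⟨_, hr⟩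

theorem stmt_6 (u v : ℝ → ℝ)
    (hu : ContDiff ℝ 1 u) (hv : ContDiff ℝ 1 v)
    (hus : HasCompactSupport u) (hvs : HasCompactSupport v)
    (husupp : tsupport u ⊆ Set.Ioo (0:ℝ) 1) (hvsupp : tsupport v ⊆ Set.Ioo (0:ℝ) 1)
    (hlt : norm2star u < norm2star v)
    (uk : ℕ → ℝ → ℝ)
    (huk : ∀ k : ℕ, ∀ r : ℝ, uk k r = u r + Real.sqrt k * v (r ^ ((k : ℝ)⁻¹))) :
    (∀ φ : ℝ → ℝ, ContDiff ℝ 1 φ → HasCompactSupport φ →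
        tsupport φ ⊆ Set.Ioo (0:ℝ) 1 →
        ∃ K : ℕ, ∀ k : ℕ, K ≤ k →
          ∫ r in Set.Ioo (0:ℝ) 1, deriv (uk k) r * deriv φ r * r =
            ∫ r in Set.Ioo (0:ℝ) 1, deriv u r * deriv φ r * r) ∧
    (∃ K : ℕ, ∀ k : ℕ, K ≤ k → norm2star (uk k) = norm2star v) := by
  obtain ⟨b, hbI, hbv⟩ := aux_bound_above v hvs hvsupp
  -- v x = 0 for x > b; b ∈ (0,1)
  have hveq : ∀ k : ℕ, 1 ≤ k → ∀ x : ℝ, b ^ k < x → v (x ^ ((k:ℝ)⁻¹)) = 0 := by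
    intro k hk x hx
    exact hbv _ (aux_rpow_gt b hbI.1 k hk x hx)
  constructor
  · intro φ hφ hφs hφsupp
    obtain ⟨e, heI, heφ⟩ := aux_bound_below φ hφs hφsupp
    obtain ⟨n, hn⟩ := exists_pow_lt_of_lt_one heI.1 hbI.2
    refine ⟨max n 1, fun k hk => ?_⟩
    have hk1 : 1 ≤ k := le_trans (le_max_right n 1) hk
    have hbk : b ^ k < e :=
      lt_of_le_of_lt (pow_le_pow_of_le_one hbI.1.le hbI.2.le (le_trans (le_max_left n 1) hk)) hn
    have key : ∀ r : ℝ, deriv (uk k) r * deriv φ r * r = deriv u r * deriv φ r * r := by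
      intro r
      by_cases hr : r ∈ tsupport φ
      · have hre : e ≤ r :=
          closure_minimal (show Function.support φ ⊆ Set.Ici e from fun x hx => le_of_not_gt fun h => hx (heφ x h)) isClosed_Ici hr
        have hrb : b ^ k < r := lt_of_lt_of_le hbk hre
        have heq : deriv (uk k) r = deriv u r := by
          apply Filter.EventuallyEq.deriv_eq
          filter_upwards [isOpen_Ioi.mem_nhds hrb] with x hx
          rw [huk k x, hveq k hk1 x hx, mul_zero, add_zero]
        rw [heq]
      · have : deriv φ r = 0 := by
          by_contra h
          exact hr (support_deriv_subset h)
        rw [this]; ring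
    exact integral_congr_ae (Filter.Eventually.of_forall fun r => key r)
  · obtain ⟨c, hcI, hcu⟩ := aux_bound_below u hus husupp
    obtain ⟨n, hn⟩ := exists_pow_lt_of_lt_one hcI.1 hbI.2
    refine ⟨max n 1, fun k hk => ?_⟩
    have hk1 : 1 ≤ k := le_trans (le_max_right n 1) hk
    have hbk : b ^ k < c :=
      lt_of_le_of_lt (pow_le_pow_of_le_one hbI.1.le hbI.2.le (le_trans (le_max_left n 1) hk)) hn
    have hukf : uk k = fun r => u r + Real.sqrt k * v (r ^ ((k:ℝ)⁻¹)) := funext (huk k)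
    have step : norm2star (uk k)
        = norm2star u ⊔ norm2star (fun r => Real.sqrt k * v (r ^ ((k:ℝ)⁻¹))) := by
      rw [hukf]
      unfold norm2star
      rw [← iSup_sup_eq]
      apply iSup_congr
      rintro ⟨r, hr⟩
      by_cases hrc : r < c
      · have hu0 : u r = 0 := hcu r hrc
        simp [hu0]
      · have hg0 : v (r ^ ((k:ℝ)⁻¹)) = 0 :=
          hveq k hk1 r (lt_of_lt_of_le hbk (not_lt.1 hrc))
        simp [hg0]
    rw [step, aux_norm2star_dilate v k hk1, sup_eq_right.2 hlt.le]
end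

section
/- Let F : (0,∞) × ℝ → ℝ be a nonnegative C¹ function with F(r,0) = 0 for all r. Suppose that (i) there exists G : ℝ → ℝ such that F(r,t) = G(t)/(1 − r²)² for all r ∈ (0,1), t ∈ ℝ, and (ii) there exists H : ℝ → ℝ such that F(r,t) = H(t/√(log(1/r))) for all r ∈ (0,1), t ∈ ℝ. Then F(r,t) = 0 for all r ∈ (0,1) and all t ∈ ℝ. In particular, no nontrivial functional of the form u ↦ ∫_𝔻 F(|x|,u(x)) dx is simultaneously Möbius shift-invariant and dilation-invariant. -/
open Real Set

theorem stmt_18 (F : ℝ → ℝ → ℝ)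
    (hF1 : ContDiffOn ℝ 1 (fun p : ℝ × ℝ => F p.1 p.2) (Set.Ioi (0:ℝ) ×ˢ Set.univ))
    (hFpos : ∀ r ∈ Set.Ioi (0:ℝ), ∀ t : ℝ, 0 ≤ F r t)
    (hF0 : ∀ r ∈ Set.Ioi (0:ℝ), F r 0 = 0)
    (hG : ∃ G : ℝ → ℝ, ∀ r ∈ Set.Ioo (0:ℝ) 1, ∀ t : ℝ,
      F r t = G t / (1 - r ^ 2) ^ 2)
    (hH : ∃ H : ℝ → ℝ, ∀ r ∈ Set.Ioo (0:ℝ) 1, ∀ t : ℝ,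
      F r t = H (t / Real.sqrt (Real.log (1 / r)))) :
    ∀ r ∈ Set.Ioo (0:ℝ) 1, ∀ t : ℝ, F r t = 0 := by
  obtain ⟨G, hG⟩ := hG
  obtain ⟨H, hH⟩ := hH
  -- G is nonnegative
  have hGnn : ∀ t : ℝ, 0 ≤ G t := by
    intro t
    have h1 : F (1/2) t = G t / (1 - (1/2:ℝ) ^ 2) ^ 2 := hG (1/2) (by norm_num) t
    have h2 : 0 ≤ F (1/2) t := hFpos (1/2) (by norm_num) t
    rw [eq_div_iff (by norm_num)] at h1
    nlinarith [h1, h2]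
  -- key functional equation obtained by comparing F r t and F (r^4) (2t)
  have key : ∀ r ∈ Set.Ioo (0:ℝ) 1, ∀ t : ℝ,
      G t * (1 - r ^ 8) ^ 2 = G (2 * t) * (1 - r ^ 2) ^ 2 := by
    intro r hr t
    have hr0 : 0 < r := hr.1
    have hr1 : r < 1 := hr.2
    have hr4 : r ^ 4 ∈ Set.Ioo (0:ℝ) 1 :=
      ⟨pow_pos hr0 4, pow_lt_one₀ hr0.le hr1 (by norm_num)⟩
    have hlog : 0 < Real.log (1/r) := Real.log_pos (by rw [lt_div_iff₀ hr0]; linarith)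
    have hs : Real.sqrt (Real.log (1/r)) ≠ 0 := (Real.sqrt_pos.mpr hlog).ne'
    have hlog4 : Real.log (1 / r ^ 4) = 4 * Real.log (1/r) := by
      rw [show (1:ℝ) / r ^ 4 = (1/r) ^ 4 by ring, Real.log_pow]
      push_cast; ring
    have hsqrt : Real.sqrt (Real.log (1 / r ^ 4)) = 2 * Real.sqrt (Real.log (1/r)) := by
      rw [hlog4, show (4:ℝ) * Real.log (1/r) = 2 ^ 2 * Real.log (1/r) by ring,
        Real.sqrt_mul (by positivity), Real.sqrt_sq (by norm_num)]
    have hFeq : F r t = F (r ^ 4) (2 * t) := by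
      rw [hH r hr t, hH (r ^ 4) hr4 (2 * t), hsqrt]
      congr 1
      field_simp
    have h1 : F r t = G t / (1 - r ^ 2) ^ 2 := hG r hr t
    have h2 : F (r ^ 4) (2 * t) = G (2 * t) / (1 - (r ^ 4) ^ 2) ^ 2 := hG (r ^ 4) hr4 (2 * t)
    have hq : (0:ℝ) < 1 - r ^ 2 := by nlinarith
    have hp : (0:ℝ) < 1 - r ^ 8 := by
      have := pow_lt_one₀ hr0.le hr1 (show (8:ℕ) ≠ 0 by norm_num)
      linarith
    rw [h1, h2, show (r ^ 4) ^ 2 = r ^ 8 by ring,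
      div_eq_div_iff (by positivity) (by positivity)] at hFeq
    linarith [hFeq]
  -- take square roots
  have sq : ∀ t : ℝ, ∀ r ∈ Set.Ioo (0:ℝ) 1,
      Real.sqrt (G t) * (1 - r ^ 8) = Real.sqrt (G (2 * t)) * (1 - r ^ 2) := by
    intro t r hr
    have hq : (0:ℝ) < 1 - r ^ 2 := by nlinarith [hr.1, hr.2]
    have hp : (0:ℝ) < 1 - r ^ 8 := by
      have := pow_lt_one₀ hr.1.le hr.2 (show (8:ℕ) ≠ 0 by norm_num)
      linarith
    have h := congrArg Real.sqrt (key r hr t)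
    rwa [Real.sqrt_mul (hGnn t), Real.sqrt_mul (hGnn (2 * t)),
      Real.sqrt_sq hp.le, Real.sqrt_sq hq.le] at h
  -- conclude G = 0
  have hGzero : ∀ t : ℝ, G t = 0 := by
    intro t
    have e1 := sq t (1/2) (by norm_num)
    have e2 := sq t (1/3) (by norm_num)
    have ha := Real.sqrt_nonneg (G t)
    have hb := Real.sqrt_nonneg (G (2 * t))
    norm_num at e1 e2
    have h0 : Real.sqrt (G t) = 0 := by linarith
    have hle : G t ≤ 0 := Real.sqrt_eq_zero'.mp h0
    linarith [hGnn t]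
  intro r hr t
  rw [hG r hr t, hGzero t]
  simp
end

section
/- Let N > 2 be an integer, let 2* = 2N/(N−2), and let u, w : ℝ^N → ℝ be continuous functions with compact support contained in the open unit ball B = {x ∈ ℝ^N : |x| < 1}. Define w_k(x) = 2^{(N−2)k/2}·w(2^k x). Then ∫_{ℝ^N} |w_k|^{2*} dx = ∫_{ℝ^N} |w|^{2*} dx for every k, and ∫_{ℝ^N} |u + w_k|^{2*} dx → ∫_{ℝ^N} |u|^{2*} dx + ∫_{ℝ^N} |w|^{2*} dx as k → ∞. -/
open Real MeasureTheory Set Filter Topology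

private lemma rpow_sub_rpow_le_mvt {p x y : ℝ} (hp : 1 ≤ p) (hx : 0 ≤ x) (hxy : x ≤ y) :
    y ^ p - x ^ p ≤ p * y ^ (p - 1) * (y - x) := by
  have hy : 0 ≤ y := hx.trans hxy
  have key : ∀ t ∈ Icc x y, ‖(fun s : ℝ => s ^ p) t - (fun s : ℝ => s ^ p) x‖
      ≤ (p * y ^ (p - 1)) * (t - x) := by
    apply norm_image_sub_le_of_norm_deriv_le_segment'
      (f' := fun t => p * t ^ (p - 1))
    · intro t _
      exact (Real.hasDerivAt_rpow_const (Or.inr hp)).hasDerivWithinAt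
    · intro t ht
      have ht0 : 0 ≤ t := hx.trans ht.1
      rw [Real.norm_eq_abs, abs_of_nonneg (by positivity)]
      exact mul_le_mul_of_nonneg_left
        (Real.rpow_le_rpow ht0 ht.2.le (by linarith)) (by linarith)
  have h := key y (right_mem_Icc.2 hxy)
  simp only [Real.norm_eq_abs] at h
  exact (le_abs_self _).trans h

private lemma abs_abs_rpow_sub_abs_rpow {p : ℝ} (hp : 1 ≤ p) (a b : ℝ) :
    abs (|a| ^ p - |b| ^ p) ≤ p * (|a| + |b|) ^ (p - 1) * |a - b| := by
  wlog h : |b| ≤ |a| generalizing a b with H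
  · have := H b a (le_of_not_ge h)
    rwa [abs_sub_comm (|b| ^ p), add_comm (|b|), abs_sub_comm b a] at this
  have h1 : |b| ^ p ≤ |a| ^ p := Real.rpow_le_rpow (abs_nonneg b) h (by linarith)
  rw [abs_of_nonneg (sub_nonneg.2 h1)]
  refine (rpow_sub_rpow_le_mvt hp (abs_nonneg b) h).trans ?_
  have h3 : |a| ^ (p - 1) ≤ (|a| + |b|) ^ (p - 1) :=
    Real.rpow_le_rpow (abs_nonneg a) (by linarith [abs_nonneg b]) (by linarith)
  have h4 : |a| - |b| ≤ |a - b| := abs_sub_abs_le_abs_sub a b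
  calc p * |a| ^ (p - 1) * (|a| - |b|)
      ≤ p * (|a| + |b|) ^ (p - 1) * (|a| - |b|) := by
        apply mul_le_mul_of_nonneg_right _ (sub_nonneg.2 h)
        exact mul_le_mul_of_nonneg_left h3 (by linarith)
    _ ≤ p * (|a| + |b|) ^ (p - 1) * |a - b| := by
        apply mul_le_mul_of_nonneg_left h4
        have : (0:ℝ) ≤ (|a| + |b|) ^ (p - 1) :=
          Real.rpow_nonneg (by positivity) _
        positivity

private lemma add_rpow_le_two_rpow {q a b : ℝ} (hq : 0 ≤ q) (ha : 0 ≤ a) (hb : 0 ≤ b) :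
    (a + b) ^ q ≤ 2 ^ q * (a ^ q + b ^ q) := by
  have h1 : a + b ≤ 2 * max a b := by
    rcases max_cases a b with ⟨h, h'⟩ | ⟨h, h'⟩ <;> rw [h] <;> linarith
  have h2 : (a + b) ^ q ≤ (2 * max a b) ^ q :=
    Real.rpow_le_rpow (by linarith) h1 hq
  rw [Real.mul_rpow (by norm_num) (le_max_of_le_left ha)] at h2
  refine h2.trans ?_
  have h3 : (max a b) ^ q ≤ a ^ q + b ^ q := by
    rcases max_cases a b with ⟨h, _⟩ | ⟨h, _⟩ <;> rw [h]
    · nlinarith [Real.rpow_nonneg hb q]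
    · nlinarith [Real.rpow_nonneg ha q]
  exact mul_le_mul_of_nonneg_left h3 (Real.rpow_nonneg (by norm_num) q)

theorem stmt_19 (N : ℕ) (hN : 2 < N) (p : ℝ) (hp : p = 2 * N / (N - 2))
    (u w : EuclideanSpace ℝ (Fin N) → ℝ)
    (hu : Continuous u) (hw : Continuous w)
    (hus : HasCompactSupport u) (hws : HasCompactSupport w)
    (husupp : tsupport u ⊆ Metric.ball (0 : EuclideanSpace ℝ (Fin N)) 1)
    (hwsupp : tsupport w ⊆ Metric.ball (0 : EuclideanSpace ℝ (Fin N)) 1)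
    (wk : ℕ → EuclideanSpace ℝ (Fin N) → ℝ)
    (hwk : ∀ k : ℕ, ∀ x : EuclideanSpace ℝ (Fin N),
      wk k x = 2 ^ (((N : ℝ) - 2) * k / 2) * w ((2 ^ k : ℝ) • x)) :
    (∀ k : ℕ, ∫ x, |wk k x| ^ p = ∫ x, |w x| ^ p) ∧
    Tendsto (fun k : ℕ => ∫ x, |u x + wk k x| ^ p) atTop
      (𝓝 ((∫ x, |u x| ^ p) + ∫ x, |w x| ^ p)) := by
  have hNR : (2:ℝ) < (N:ℝ) := by exact_mod_cast hN
  have hN2 : (0:ℝ) < (N:ℝ) - 2 := by linarith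
  have hne : ((N:ℝ) - 2) ≠ 0 := ne_of_gt hN2
  have hp2 : 2 < p := by
    rw [hp, lt_div_iff₀ hN2]; linarith
  have hp1 : 1 ≤ p := by linarith
  have hppos : 0 < p := by linarith
  have hpm1 : 0 < p - 1 := by linarith
  -- continuity / integrability helpers
  have hco : ∀ q : ℝ, 0 ≤ q → ∀ f : EuclideanSpace ℝ (Fin N) → ℝ, Continuous f →
      Continuous fun x => |f x| ^ q := by
    intro q hq f hf
    have h1 : Continuous fun t : ℝ => |t| ^ q := by
      rw [continuous_iff_continuousAt]
      intro t
      exact (Real.continuousAt_rpow_const _ q (Or.inr hq)).comp continuous_abs.continuousAt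
    exact h1.comp hf
  have hcs : ∀ q : ℝ, q ≠ 0 → ∀ f : EuclideanSpace ℝ (Fin N) → ℝ, HasCompactSupport f →
      HasCompactSupport fun x => |f x| ^ q := by
    intro q hq f hfs
    exact hfs.comp_left (g := fun t => |t| ^ q) (by simp [Real.zero_rpow hq])
  have hint : ∀ q : ℝ, 0 < q → ∀ f : EuclideanSpace ℝ (Fin N) → ℝ, Continuous f →
      HasCompactSupport f → Integrable (fun x => |f x| ^ q) := by
    intro q hq f hf hfs
    exact (hco q hq.le f hf).integrable_of_hasCompactSupport (hcs q hq.ne' f hfs)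
  -- basic facts about wk
  have hwkc : ∀ k, Continuous (wk k) := by
    intro k
    have : wk k = fun x => 2 ^ (((N:ℝ) - 2) * k / 2) * w ((2 ^ k : ℝ) • x) := funext (hwk k)
    rw [this]
    exact continuous_const.mul (hw.comp (continuous_const_smul _))
  have hball : ∀ k x, wk k x ≠ 0 → ‖x‖ ≤ ((2:ℝ) ^ k)⁻¹ := by
    intro k x hx
    rw [hwk k x] at hx
    have hwz : w ((2 ^ k : ℝ) • x) ≠ 0 := by
      intro h; exact hx (by rw [h, mul_zero])
    have hmem : ((2:ℝ) ^ k) • x ∈ tsupport w := subset_closure hwz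
    have h1 := hwsupp hmem
    rw [Metric.mem_ball, dist_zero_right, norm_smul, Real.norm_eq_abs,
      abs_of_pos (by positivity : (0:ℝ) < (2:ℝ) ^ k)] at h1
    rw [← one_div, le_div_iff₀ (by positivity : (0:ℝ) < (2:ℝ) ^ k)]
    nlinarith [norm_nonneg x]
  have hwks : ∀ k, HasCompactSupport (wk k) := by
    intro k
    apply HasCompactSupport.intro
      (isCompact_closedBall (0 : EuclideanSpace ℝ (Fin N)) (((2:ℝ) ^ k)⁻¹))
    intro x hx
    by_contra h
    exact hx (mem_closedBall_zero_iff.2 (hball k x h))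
  -- change of variables
  have hscale : ∀ q : ℝ, ∀ k : ℕ, ∫ x, |wk k x| ^ q
      = (2:ℝ) ^ ((((N:ℝ) - 2) * k / 2) * q - (N:ℝ) * k) * ∫ x, |w x| ^ q := by
    intro q k
    have hA : (0:ℝ) ≤ 2 ^ (((N:ℝ) - 2) * k / 2) := Real.rpow_nonneg (by norm_num) _
    have h1 : ∀ x : EuclideanSpace ℝ (Fin N), |wk k x| ^ q
        = (2:ℝ) ^ ((((N:ℝ) - 2) * k / 2) * q) * |w ((2 ^ k : ℝ) • x)| ^ q := by
      intro x
      rw [hwk k x, abs_mul, abs_of_nonneg hA, Real.mul_rpow hA (abs_nonneg _),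
        ← Real.rpow_mul (by norm_num : (0:ℝ) ≤ 2)]
    simp_rw [h1]
    rw [integral_const_mul]
    rw [MeasureTheory.Measure.integral_comp_smul_of_nonneg
      (μ := (volume : Measure (EuclideanSpace ℝ (Fin N))))
      (fun y => |w y| ^ q) ((2:ℝ) ^ k) (hR := by positivity)]
    rw [smul_eq_mul, finrank_euclideanSpace_fin, ← mul_assoc]
    congr 1
    rw [← pow_mul, ← Real.rpow_natCast 2 (k * N), ← Real.rpow_neg (by norm_num : (0:ℝ) ≤ 2),
      ← Real.rpow_add (by norm_num : (0:ℝ) < 2)]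
    congr 1
    push_cast
    ring
  -- part 1
  have part1 : ∀ k : ℕ, ∫ x, |wk k x| ^ p = ∫ x, |w x| ^ p := by
    intro k
    rw [hscale p k]
    have h0 : (((N:ℝ) - 2) * k / 2) * p - (N:ℝ) * k = 0 := by
      rw [hp]; field_simp; ring
    rw [h0, Real.rpow_zero, one_mul]
  refine ⟨part1, ?_⟩
  -- bound on u
  obtain ⟨x₀, hx₀⟩ := (hu.abs).exists_forall_ge_of_hasCompactSupport hus.abs
  set M : ℝ := |u x₀| with hMdef
  have hM0 : 0 ≤ M := abs_nonneg _
  have hMb : ∀ x, |u x| ≤ M := hx₀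
  set C : ℝ := p * 2 ^ (p - 1) * 2 ^ (p - 1) with hCdef
  have hC0 : 0 ≤ C := by
    have h2 : (0:ℝ) ≤ (2:ℝ) ^ (p - 1) := Real.rpow_nonneg (by norm_num) _
    positivity
  -- pointwise scalar bound
  have hgbound : ∀ a s : ℝ, abs (|a + s| ^ p - |s| ^ p)
      ≤ C * (|a| * |a| ^ (p - 1) + |a| * |s| ^ (p - 1)) := by
    intro a s
    have h1 := abs_abs_rpow_sub_abs_rpow hp1 (a + s) s
    rw [show a + s - s = a by ring] at h1
    refine h1.trans ?_
    have h2 : (|a + s| + |s|) ^ (p - 1)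
        ≤ 2 ^ (p - 1) * (2 ^ (p - 1) * (|a| ^ (p - 1) + |s| ^ (p - 1))) := by
      have hle : |a + s| + |s| ≤ 2 * (|a| + |s|) := by
        have := abs_add_le a s
        linarith [abs_nonneg s, abs_nonneg a]
      have h3 := Real.rpow_le_rpow (z := p - 1) (by positivity) hle (by linarith)
      rw [Real.mul_rpow (by norm_num) (by positivity)] at h3
      refine h3.trans ?_
      exact mul_le_mul_of_nonneg_left
        (add_rpow_le_two_rpow (by linarith) (abs_nonneg a) (abs_nonneg s))
        (Real.rpow_nonneg (by norm_num) _)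
    calc p * (|a + s| + |s|) ^ (p - 1) * |a|
        ≤ p * (2 ^ (p - 1) * (2 ^ (p - 1) * (|a| ^ (p - 1) + |s| ^ (p - 1)))) * |a| := by
          apply mul_le_mul_of_nonneg_right
            (mul_le_mul_of_nonneg_left h2 (by linarith)) (abs_nonneg a)
      _ = C * (|a| * |a| ^ (p - 1) + |a| * |s| ^ (p - 1)) := by
          rw [hCdef]; ring
  set K : ℝ := C * (M * M ^ (p - 1)) + M ^ p with hKdef
  have hK0 : 0 ≤ K := by
    have h1 : (0:ℝ) ≤ M ^ (p - 1) := Real.rpow_nonneg hM0 _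
    have h2 : (0:ℝ) ≤ M ^ p := Real.rpow_nonneg hM0 _
    positivity
  set r : ℕ → ℝ := fun k => ((2:ℝ) ^ k)⁻¹ with hrdef
  have hr0 : ∀ k, (0:ℝ) ≤ r k := fun k => by positivity
  -- pointwise bound
  have hptwise : ∀ k x, |(|u x + wk k x| ^ p - |wk k x| ^ p) - |u x| ^ p|
      ≤ (Metric.closedBall (0 : EuclideanSpace ℝ (Fin N)) (r k)).indicator (fun _ => K) x
        + (C * M) * |wk k x| ^ (p - 1) := by
    intro k x
    have hind : 0 ≤ (Metric.closedBall (0 : EuclideanSpace ℝ (Fin N)) (r k)).indicator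
        (fun _ => K) x := Set.indicator_nonneg (fun _ _ => hK0) x
    by_cases hs : wk k x = 0
    · rw [hs]
      have : |(|u x + 0| ^ p - |0| ^ p) - |u x| ^ p| = 0 := by
        rw [add_zero, abs_zero, Real.zero_rpow (ne_of_gt hppos)]
        simp
      rw [this]
      have : (0:ℝ) ≤ (C * M) * |(0:ℝ)| ^ (p - 1) := by
        have := Real.rpow_nonneg (abs_nonneg (0:ℝ)) (p - 1)
        positivity
      linarith
    · have hxmem : x ∈ Metric.closedBall (0 : EuclideanSpace ℝ (Fin N)) (r k) :=
        mem_closedBall_zero_iff.2 (hball k x hs)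
      rw [Set.indicator_of_mem hxmem]
      set T : ℝ := |wk k x| ^ (p - 1) with hTdef
      have hT0 : 0 ≤ T := Real.rpow_nonneg (abs_nonneg _) _
      have h1 : |(|u x + wk k x| ^ p - |wk k x| ^ p) - |u x| ^ p|
          ≤ abs (|u x + wk k x| ^ p - |wk k x| ^ p) + |u x| ^ p := by
        have := abs_sub (|u x + wk k x| ^ p - |wk k x| ^ p) (|u x| ^ p)
        rwa [abs_of_nonneg (Real.rpow_nonneg (abs_nonneg _) p)] at this
      have h2 := hgbound (u x) (wk k x)
      have h3 : |u x| * |u x| ^ (p - 1) ≤ M * M ^ (p - 1) :=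
        mul_le_mul (hMb x) (Real.rpow_le_rpow (abs_nonneg _) (hMb x) (by linarith))
          (Real.rpow_nonneg (abs_nonneg _) _) hM0
      have h4 : |u x| * T ≤ M * T := mul_le_mul_of_nonneg_right (hMb x) hT0
      have h5 : |u x| ^ p ≤ M ^ p :=
        Real.rpow_le_rpow (abs_nonneg _) (hMb x) (by linarith)
      have h6 := mul_le_mul_of_nonneg_left (add_le_add h3 h4) hC0
      have h7 : C * (M * M ^ (p - 1) + M * T) = C * (M * M ^ (p - 1)) + (C * M) * T := by ring
      rw [hKdef]
      linarith
  -- integrability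
  have int_u : Integrable (fun x => |u x| ^ p) := hint p hppos u hu hus
  have int_wkp : ∀ k, Integrable (fun x => |wk k x| ^ p) :=
    fun k => hint p hppos _ (hwkc k) (hwks k)
  have int_wkq : ∀ k, Integrable (fun x => |wk k x| ^ (p - 1)) :=
    fun k => hint (p - 1) hpm1 _ (hwkc k) (hwks k)
  have int_sum : ∀ k, Integrable (fun x => |u x + wk k x| ^ p) :=
    fun k => hint p hppos _ (hu.add (hwkc k)) (hus.add (hwks k))
  have int_g : ∀ k, Integrable (fun x => |u x + wk k x| ^ p - |wk k x| ^ p) :=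
    fun k => (int_sum k).sub (int_wkp k)
  have int_lhs : ∀ k, Integrable
      (fun x => |(|u x + wk k x| ^ p - |wk k x| ^ p) - |u x| ^ p|) :=
    fun k => ((int_g k).sub int_u).abs
  have int_ind : ∀ k, Integrable
      ((Metric.closedBall (0 : EuclideanSpace ℝ (Fin N)) (r k)).indicator (fun _ => K)) :=
    fun k => (integrable_indicator_iff measurableSet_closedBall).2
      (integrableOn_const measure_closedBall_lt_top.ne)
  have int_rhs : ∀ k, Integrable (fun x =>
      (Metric.closedBall (0 : EuclideanSpace ℝ (Fin N)) (r k)).indicator (fun _ => K) x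
        + (C * M) * |wk k x| ^ (p - 1)) :=
    fun k => (int_ind k).add ((int_wkq k).const_mul _)
  -- integral bound
  have key_le : ∀ k, ∫ x, |(|u x + wk k x| ^ p - |wk k x| ^ p) - |u x| ^ p|
      ≤ K * (volume (Metric.closedBall (0 : EuclideanSpace ℝ (Fin N)) (r k))).toReal
        + (C * M) * ∫ x, |wk k x| ^ (p - 1) := by
    intro k
    have h1 := integral_mono (int_lhs k) (int_rhs k) (hptwise k)
    rw [integral_add (int_ind k) ((int_wkq k).const_mul _),
      integral_indicator_const K measurableSet_closedBall,
      integral_const_mul, smul_eq_mul, mul_comm] at h1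
    exact h1
  -- identify the bound sequence
  set V1 : ℝ := (volume (Metric.ball (0 : EuclideanSpace ℝ (Fin N)) 1)).toReal with hV1
  have vol_eq : ∀ k, (volume (Metric.closedBall (0 : EuclideanSpace ℝ (Fin N)) (r k))).toReal
      = (((2:ℝ)⁻¹) ^ N) ^ k * V1 := by
    intro k
    rw [Measure.addHaar_closedBall volume (0 : EuclideanSpace ℝ (Fin N)) (hr0 k),
      ENNReal.toReal_mul, ENNReal.toReal_ofReal (by positivity), finrank_euclideanSpace_fin]
    congr 1
    rw [hrdef]
    simp only [← inv_pow, ← pow_mul]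
    rw [Nat.mul_comm]
  set c₀ : ℝ := ((N:ℝ) - 2) / 2 * (p - 1) - N with hc₀
  have hc₀neg : c₀ < 0 := by
    have : c₀ = (2 - (N:ℝ)) / 2 := by
      rw [hc₀, hp]; field_simp; ring
    rw [this]; linarith
  have wkq_eq : ∀ k, ∫ x, |wk k x| ^ (p - 1) = ((2:ℝ) ^ c₀) ^ k * ∫ x, |w x| ^ (p - 1) := by
    intro k
    rw [hscale (p - 1) k]
    congr 1
    rw [show (((N:ℝ) - 2) * k / 2) * (p - 1) - (N:ℝ) * k = c₀ * k by rw [hc₀]; ring,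
      Real.rpow_mul (by norm_num : (0:ℝ) ≤ 2), Real.rpow_natCast]
  -- the bound sequence tends to 0
  set B : ℕ → ℝ := fun k => K * ((((2:ℝ)⁻¹) ^ N) ^ k * V1)
    + ((C * M) * ∫ x, |w x| ^ (p - 1)) * ((2:ℝ) ^ c₀) ^ k with hBdef
  have hBk : ∀ k, ∫ x, |(|u x + wk k x| ^ p - |wk k x| ^ p) - |u x| ^ p| ≤ B k := by
    intro k
    refine (key_le k).trans_eq ?_
    rw [vol_eq k, wkq_eq k, hBdef]
    ring
  have hB0 : Tendsto B atTop (𝓝 0) := by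
    have g1 : Tendsto (fun k : ℕ => (((2:ℝ)⁻¹) ^ N) ^ k) atTop (𝓝 0) :=
      tendsto_pow_atTop_nhds_zero_of_lt_one (by positivity)
        (pow_lt_one₀ (by norm_num) (by norm_num) (by omega))
    have g2 : Tendsto (fun k : ℕ => ((2:ℝ) ^ c₀) ^ k) atTop (𝓝 0) :=
      tendsto_pow_atTop_nhds_zero_of_lt_one (Real.rpow_nonneg (by norm_num) _)
        (Real.rpow_lt_one_of_one_lt_of_neg (by norm_num) hc₀neg)
    have := ((g1.mul (tendsto_const_nhds (x := V1))).const_mul K).add (g2.const_mul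
      ((C * M) * ∫ x, |w x| ^ (p - 1)))
    have h00 : K * (0 * V1) + ((C * M) * ∫ x, |w x| ^ (p - 1)) * 0 = 0 := by ring
    rw [hBdef, ← h00]
    exact this
  -- convergence of the main sequence
  have hD : Tendsto (fun k => ∫ x, (|u x + wk k x| ^ p - |wk k x| ^ p)) atTop
      (𝓝 (∫ x, |u x| ^ p)) := by
    have hdiff : ∀ k, ‖(∫ x, (|u x + wk k x| ^ p - |wk k x| ^ p)) - ∫ x, |u x| ^ p‖ ≤ B k := by
      intro k
      rw [← integral_sub (int_g k) int_u]
      refine (norm_integral_le_integral_norm _).trans ?_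
      simp only [Real.norm_eq_abs]
      exact hBk k
    have h0 := squeeze_zero_norm hdiff hB0
    have h1 := h0.add_const (∫ x, |u x| ^ p)
    simpa using h1
  have heq : ∀ k, ∫ x, |u x + wk k x| ^ p
      = (∫ x, (|u x + wk k x| ^ p - |wk k x| ^ p)) + ∫ x, |w x| ^ p := by
    intro k
    calc ∫ x, |u x + wk k x| ^ p
        = ∫ x, ((|u x + wk k x| ^ p - |wk k x| ^ p) + |wk k x| ^ p) := by
          simp only [sub_add_cancel]
      _ = (∫ x, (|u x + wk k x| ^ p - |wk k x| ^ p)) + ∫ x, |wk k x| ^ p :=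
          integral_add (int_g k) (int_wkp k)
      _ = (∫ x, (|u x + wk k x| ^ p - |wk k x| ^ p)) + ∫ x, |w x| ^ p := by rw [part1 k]
  have : (fun k : ℕ => ∫ x, |u x + wk k x| ^ p)
      = fun k => (∫ x, (|u x + wk k x| ^ p - |wk k x| ^ p)) + ∫ x, |w x| ^ p := funext heq
  rw [this]
  exact hD.add_const _
end
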